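/- For a multiplicative n-Hom Lie superalgebra N, [Der(N), C(N)] ⊆ C(N): if D is a homogeneous α^k-derivation of degree ξ and E a homogeneous α^s-centroid element of degree η, then the supercommutator [D,E] = DE − (−1)^{ξη}ED is an α^{k+s}-centroid element of degree ξ+η. -/

import Mathlib

open scoped BigOperators

noncomputable section

variable {𝔽 : Type*} [Field 𝔽]
variable {N : Type*} [AddCommGroup N] [Module 𝔽 N]

/-- The sign `(-1)^g` for `g : ZMod 2`. -/
def sgn (𝔽 : Type*) [Field 𝔽] (g : ZMod 2) : 𝔽 := if g = 0 then 1 else -1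

/-- `|X_{i-1}|` : the sum of the degrees `d j` for `j < i`. -/
def psum {m : ℕ} (d : Fin m → ZMod 2) (i : Fin m) : ZMod 2 :=
  ∑ j ∈ Finset.univ.filter (fun j => j < i), d j

/-- `D` is homogeneous of degree `ξ` with respect to the `ℤ₂`-grading `gr`. -/
def Homog (gr : ZMod 2 → Submodule 𝔽 N) (ξ : ZMod 2) (D : N →ₗ[𝔽] N) : Prop :=
  ∀ g : ZMod 2, ∀ x ∈ gr g, D x ∈ gr (g + ξ)

/-- `(N, br, α)` is a multiplicative `n`-Hom Lie superalgebra, where `n = m + 1`: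
`N = N₀ ⊕ N₁` is `ℤ₂`-graded, the `n`-multilinear bracket `br` is even (adds degrees),
super skew-symmetric in adjacent arguments, `α` is even, multiplicative, and the super
Hom-Jacobi identity holds. -/
structure IsMNHLS {m : ℕ} (gr : ZMod 2 → Submodule 𝔽 N)
    (br : MultilinearMap 𝔽 (fun _ : Fin (m + 1) => N) N) (α : N →ₗ[𝔽] N) : Prop where
  internal : DirectSum.IsInternal gr
  alpha_even : ∀ g : ZMod 2, ∀ x ∈ gr g, α x ∈ gr g
  br_deg : ∀ (d : Fin (m + 1) → ZMod 2) (x : Fin (m + 1) → N),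
      (∀ i, x i ∈ gr (d i)) → br x ∈ gr (∑ i, d i)
  skew : ∀ (d : Fin (m + 1) → ZMod 2) (x : Fin (m + 1) → N),
      (∀ i, x i ∈ gr (d i)) → ∀ i j : Fin (m + 1), (i : ℕ) + 1 = (j : ℕ) →
      br x = -sgn 𝔽 (d i * d j) • br (x ∘ Equiv.swap i j)
  alpha_br : ∀ x : Fin (m + 1) → N, α (br x) = br fun i => α (x i)
  jacobi : ∀ (dx : Fin m → ZMod 2) (x : Fin m → N)
      (dy : Fin (m + 1) → ZMod 2) (y : Fin (m + 1) → N),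
      (∀ i, x i ∈ gr (dx i)) → (∀ i, y i ∈ gr (dy i)) →
      br (Fin.snoc (fun i => α (x i)) (br y)) =
        ∑ i : Fin (m + 1), sgn 𝔽 ((∑ j, dx j) * psum dy i) •
          br (Function.update (fun j => α (y j)) i (br (Fin.snoc x (y i))))

/-- `D` is a homogeneous `α^k`-derivation of degree `ξ`. -/
def IsDer {m : ℕ} (gr : ZMod 2 → Submodule 𝔽 N)
    (br : MultilinearMap 𝔽 (fun _ : Fin (m + 1) => N) N) (α : N →ₗ[𝔽] N)
    (k : ℕ) (ξ : ZMod 2) (D : N →ₗ[𝔽] N) : Prop :=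
  Homog gr ξ D ∧ D ∘ₗ α = α ∘ₗ D ∧
    ∀ (d : Fin (m + 1) → ZMod 2) (x : Fin (m + 1) → N), (∀ i, x i ∈ gr (d i)) →
      D (br x) = ∑ i : Fin (m + 1), sgn 𝔽 (ξ * psum d i) •
        br (Function.update (fun j => (α ^ k) (x j)) i (D (x i)))

/-- `D` is a homogeneous `α^k`-quasiderivation of degree `ξ` with associated map `D'`. -/
def IsQDerWith {m : ℕ} (gr : ZMod 2 → Submodule 𝔽 N)
    (br : MultilinearMap 𝔽 (fun _ : Fin (m + 1) => N) N) (α : N →ₗ[𝔽] N)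
    (k : ℕ) (ξ : ZMod 2) (D D' : N →ₗ[𝔽] N) : Prop :=
  Homog gr ξ D ∧ D ∘ₗ α = α ∘ₗ D ∧ Homog gr ξ D' ∧ D' ∘ₗ α = α ∘ₗ D' ∧
    ∀ (d : Fin (m + 1) → ZMod 2) (x : Fin (m + 1) → N), (∀ i, x i ∈ gr (d i)) →
      (∑ i : Fin (m + 1), sgn 𝔽 (ξ * psum d i) •
        br (Function.update (fun j => (α ^ k) (x j)) i (D (x i)))) = D' (br x)

/-- `D` is a homogeneous `α^k`-quasiderivation of degree `ξ`. -/
def IsQDer {m : ℕ} (gr : ZMod 2 → Submodule 𝔽 N)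
    (br : MultilinearMap 𝔽 (fun _ : Fin (m + 1) => N) N) (α : N →ₗ[𝔽] N)
    (k : ℕ) (ξ : ZMod 2) (D : N →ₗ[𝔽] N) : Prop :=
  ∃ D' : N →ₗ[𝔽] N, IsQDerWith gr br α k ξ D D'

/-- `D` is a homogeneous generalized `α^k`-derivation of degree `ξ`:
there are `D⁽¹⁾, …, D⁽ⁿ⁾` (here `DD i` for positions `i = 1, …, n-1`, with `DD 0 = D`,
and `Dn = D⁽ⁿ⁾`) all homogeneous of degree `ξ` and commuting with `α`, satisfying the
defining identity. -/
def IsGDer {m : ℕ} (gr : ZMod 2 → Submodule 𝔽 N)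
    (br : MultilinearMap 𝔽 (fun _ : Fin (m + 1) => N) N) (α : N →ₗ[𝔽] N)
    (k : ℕ) (ξ : ZMod 2) (D : N →ₗ[𝔽] N) : Prop :=
  Homog gr ξ D ∧ D ∘ₗ α = α ∘ₗ D ∧
    ∃ (DD : Fin (m + 1) → (N →ₗ[𝔽] N)) (Dn : N →ₗ[𝔽] N),
      DD 0 = D ∧ (∀ i, Homog gr ξ (DD i)) ∧ (∀ i, DD i ∘ₗ α = α ∘ₗ DD i) ∧
      Homog gr ξ Dn ∧ Dn ∘ₗ α = α ∘ₗ Dn ∧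
      ∀ (d : Fin (m + 1) → ZMod 2) (x : Fin (m + 1) → N), (∀ i, x i ∈ gr (d i)) →
        (∑ i : Fin (m + 1), sgn 𝔽 (ξ * psum d i) •
          br (Function.update (fun j => (α ^ k) (x j)) i (DD i (x i)))) = Dn (br x)

/-- `D` is a homogeneous `α^k`-centroid element of degree `ξ`. -/
def IsCent {m : ℕ} (gr : ZMod 2 → Submodule 𝔽 N)
    (br : MultilinearMap 𝔽 (fun _ : Fin (m + 1) => N) N) (α : N →ₗ[𝔽] N)
    (k : ℕ) (ξ : ZMod 2) (D : N →ₗ[𝔽] N) : Prop :=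
  Homog gr ξ D ∧ D ∘ₗ α = α ∘ₗ D ∧
    ∀ (d : Fin (m + 1) → ZMod 2) (x : Fin (m + 1) → N), (∀ i, x i ∈ gr (d i)) →
      (∀ i : Fin (m + 1),
        br (Function.update (fun j => (α ^ k) (x j)) 0 (D (x 0))) =
          sgn 𝔽 (ξ * psum d i) •
            br (Function.update (fun j => (α ^ k) (x j)) i (D (x i)))) ∧
      br (Function.update (fun j => (α ^ k) (x j)) 0 (D (x 0))) = D (br x)

/-- `D` is a homogeneous `α^k`-quasicentroid element of degree `ξ`. -/
def IsQCent {m : ℕ} (gr : ZMod 2 → Submodule 𝔽 N)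
    (br : MultilinearMap 𝔽 (fun _ : Fin (m + 1) => N) N) (α : N →ₗ[𝔽] N)
    (k : ℕ) (ξ : ZMod 2) (D : N →ₗ[𝔽] N) : Prop :=
  Homog gr ξ D ∧ D ∘ₗ α = α ∘ₗ D ∧
    ∀ (d : Fin (m + 1) → ZMod 2) (x : Fin (m + 1) → N), (∀ i, x i ∈ gr (d i)) →
      ∀ i : Fin (m + 1),
        br (Function.update (fun j => (α ^ k) (x j)) 0 (D (x 0))) =
          sgn 𝔽 (ξ * psum d i) •
            br (Function.update (fun j => (α ^ k) (x j)) i (D (x i)))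

/-- `D` is a homogeneous `α^k`-center derivation of degree `ξ`. -/
def IsZDer {m : ℕ} (gr : ZMod 2 → Submodule 𝔽 N)
    (br : MultilinearMap 𝔽 (fun _ : Fin (m + 1) => N) N) (α : N →ₗ[𝔽] N)
    (k : ℕ) (ξ : ZMod 2) (D : N →ₗ[𝔽] N) : Prop :=
  Homog gr ξ D ∧ D ∘ₗ α = α ∘ₗ D ∧
    ∀ (d : Fin (m + 1) → ZMod 2) (x : Fin (m + 1) → N), (∀ i, x i ∈ gr (d i)) →
      br (Function.update (fun j => (α ^ k) (x j)) 0 (D (x 0))) = 0 ∧ D (br x) = 0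

/-- The center `Z(N) = {x : [x, y₂, …, yₙ] = 0}`. -/
def center {m : ℕ} (br : MultilinearMap 𝔽 (fun _ : Fin (m + 1) => N) N) :
    Submodule 𝔽 N where
  carrier := {x | ∀ y : Fin (m + 1) → N, br (Function.update y 0 x) = 0}
  add_mem' := by
    intro a b ha hb y
    rw [MultilinearMap.map_update_add, ha y, hb y, add_zero]
  zero_mem' := by
    intro y
    exact br.map_update_zero y 0
  smul_mem' := by
    intro c a ha y
    rw [MultilinearMap.map_update_smul, ha y, smul_zero]

/-- The Jordan product `D • E = ½(DE + (-1)^{|D||E|} ED)` of operators of degrees `ξ, η`. -/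
def jprod (𝔽 : Type*) [Field 𝔽] {N : Type*} [AddCommGroup N] [Module 𝔽 N]
    (ξ η : ZMod 2) (D E : N →ₗ[𝔽] N) : N →ₗ[𝔽] N :=
  (2 : 𝔽)⁻¹ • (D ∘ₗ E + sgn 𝔽 (ξ * η) • (E ∘ₗ D))

/-- The Hom-associator of the Jordan product with respect to `α̃(u) = α ∘ u`, where
`x, y, z` have degrees `a, b, c`. -/
def jassoc (𝔽 : Type*) [Field 𝔽] {N : Type*} [AddCommGroup N] [Module 𝔽 N]
    (α : N →ₗ[𝔽] N) (a b c : ZMod 2) (x y z : N →ₗ[𝔽] N) : N →ₗ[𝔽] N :=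
  jprod 𝔽 (a + b) c (jprod 𝔽 a b x y) (α ∘ₗ z) -
    jprod 𝔽 a (b + c) (α ∘ₗ x) (jprod 𝔽 b c y z)

/-- The bracket subalgebra `[N, …, N]`, the span of all brackets. -/
def brSub {m : ℕ} (br : MultilinearMap 𝔽 (fun _ : Fin (m + 1) => N) N) :
    Submodule 𝔽 N :=
  Submodule.span 𝔽 (Set.range fun x : Fin (m + 1) → N => br x)

/-- The bracket of `Ň = Nt + Ntⁿ` (modelled as `N × N`, first coordinate the coefficient
of `t`, second the coefficient of `tⁿ`): `[x₁t, …, xₙt] = [x₁, …, xₙ]tⁿ` and every bracket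
involving a `tⁿ`-term vanishes. -/
def checkBr {m : ℕ} (br : MultilinearMap 𝔽 (fun _ : Fin (m + 1) => N) N) :
    MultilinearMap 𝔽 (fun _ : Fin (m + 1) => N × N) (N × N) :=
  (LinearMap.inr 𝔽 N N).compMultilinearMap
    (br.compLinearMap fun _ => LinearMap.fst 𝔽 N N)

/-- The grading of `Ň = Nt + Ntⁿ`. -/
def checkGr (gr : ZMod 2 → Submodule 𝔽 N) (g : ZMod 2) : Submodule 𝔽 (N × N) :=
  (gr g).prod (gr g)

/-- The map `φ(D) : Ň → Ň`, `φ(D)(at + utⁿ + btⁿ) = D(a)t + D'(b)tⁿ`, where `π` is the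
projection of `N` onto `[N, …, N]` along `U`. -/
def phiMap (D D' π : N →ₗ[𝔽] N) : N × N →ₗ[𝔽] N × N :=
  LinearMap.prodMap D (D' ∘ₗ π)

section Aux

lemma sgn_add' (𝔽 : Type*) [Field 𝔽] (a b : ZMod 2) :
    sgn 𝔽 (a + b) = sgn 𝔽 a * sgn 𝔽 b := by
  have h01 : ∀ c : ZMod 2, c = 0 ∨ c = 1 := by decide
  rcases h01 a with rfl | rfl <;> rcases h01 b with rfl | rfl <;>
    simp [sgn, (by decide : (1 + 1 : ZMod 2) = 0), (by decide : (1 : ZMod 2) ≠ 0)]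

lemma sgn_sq (𝔽 : Type*) [Field 𝔽] (a : ZMod 2) : sgn 𝔽 a * sgn 𝔽 a = 1 := by
  have h01 : ∀ c : ZMod 2, c = 0 ∨ c = 1 := by decide
  rcases h01 a with rfl | rfl <;> simp [sgn, (by decide : (1 : ZMod 2) ≠ 0)]

lemma sgn_zero' (𝔽 : Type*) [Field 𝔽] : sgn 𝔽 0 = 1 := by simp [sgn]

lemma sgn_cancel {𝔽 : Type*} [Field 𝔽] {N : Type*} [AddCommGroup N] [Module 𝔽 N]
    {a : ZMod 2} {u w : N} (h : u = sgn 𝔽 a • w) : w = sgn 𝔽 a • u := by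
  rw [h, smul_smul, sgn_sq, one_smul]

lemma comm_pow' {𝔽 : Type*} [Field 𝔽] {N : Type*} [AddCommGroup N] [Module 𝔽 N]
    {D A : N →ₗ[𝔽] N} (h : D ∘ₗ A = A ∘ₗ D) (t : ℕ) (z : N) :
    D ((A ^ t) z) = (A ^ t) (D z) := by
  induction t generalizing z with
  | zero => simp
  | succ t ih =>
    have h' : D (A z) = A (D z) := by
      have := LinearMap.congr_fun h z; simpa using this
    rw [pow_succ, Module.End.mul_apply, Module.End.mul_apply, ih, h']

lemma pow_mem' {𝔽 : Type*} [Field 𝔽] {N : Type*} [AddCommGroup N] [Module 𝔽 N]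
    {gr : ZMod 2 → Submodule 𝔽 N} {A : N →ₗ[𝔽] N}
    (hA : ∀ g : ZMod 2, ∀ x ∈ gr g, A x ∈ gr g) (t : ℕ) (g : ZMod 2) (x : N)
    (hx : x ∈ gr g) : (A ^ t) x ∈ gr g := by
  induction t generalizing x with
  | zero => simpa
  | succ t ih => rw [pow_succ, Module.End.mul_apply]; exact ih _ (hA g x hx)

lemma psum_update' {m : ℕ} (d : Fin m → ZMod 2) (j : Fin m) (c : ZMod 2) (i : Fin m) :
    psum (Function.update d j (d j + c)) i = psum d i + (if j < i then c else 0) := by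
  unfold psum
  by_cases h : j < i
  · have hj : j ∈ Finset.univ.filter (fun l => l < i) := by simp [h]
    rw [Finset.sum_update_of_mem hj, if_pos h, ← Finset.add_sum_erase _ d hj,
      show Finset.univ.filter (fun l : Fin m => l < i) \ {j}
          = (Finset.univ.filter (fun l : Fin m => l < i)).erase j from by
        rw [Finset.erase_eq]]
    ring
  · have hj : j ∉ Finset.univ.filter (fun l => l < i) := by simp [h]
    rw [Finset.sum_update_of_notMem hj, if_neg h, add_zero]

lemma psum_zero' {m : ℕ} (d : Fin (m + 1) → ZMod 2) : psum d 0 = 0 := by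
  unfold psum
  rw [Finset.filter_false_of_mem, Finset.sum_empty]
  intro l _; exact Fin.not_lt_zero l

lemma z2A : ∀ x h P Q : ZMod 2, h * P + (x * (Q + h) + h * (P + 0)) = x * h + x * Q := by
  decide
lemma z2B : ∀ x h P Q : ZMod 2, h * P + (x * (Q + 0) + h * (P + x)) = x * h + x * Q := by
  decide
lemma z2C : ∀ x h P : ZMod 2, h * P + x * P = (x + h) * P := by decide
lemma z2D : ∀ x h P : ZMod 2, x * h + x * P + h * P = (x + h) * P + x * h := by decide

end Aux

/-- Proposition 3.2(1): `[Der(N), C(N)] ⊆ C(N)`. -/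
theorem der_bracket_cent {𝔽 : Type*} [Field 𝔽] [CharZero 𝔽]
    {N : Type*} [AddCommGroup N] [Module 𝔽 N] {m : ℕ} (hm : 1 ≤ m)
    (gr : ZMod 2 → Submodule 𝔽 N) (br : MultilinearMap 𝔽 (fun _ : Fin (m + 1) => N) N)
    (α : N →ₗ[𝔽] N) (H : IsMNHLS gr br α)
    (k s : ℕ) (ξ η : ZMod 2) (D E : N →ₗ[𝔽] N)
    (hD : IsDer gr br α k ξ D) (hE : IsCent gr br α s η E) :
    IsCent gr br α (k + s) (ξ + η) (D ∘ₗ E - sgn 𝔽 (ξ * η) • (E ∘ₗ D)) := by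
  obtain ⟨hDh, hDa, hDder⟩ := hD
  obtain ⟨hEh, hEa, hEc⟩ := hE
  set C : N →ₗ[𝔽] N := D ∘ₗ E - sgn 𝔽 (ξ * η) • (E ∘ₗ D) with hC
  have hCapp : ∀ z, C z = D (E z) - sgn 𝔽 (ξ * η) • E (D z) := by
    intro z; simp [hC]
  refine ⟨?_, ?_, ?_⟩
  · -- homogeneity
    intro g z hz
    rw [hCapp]
    have h1 : D (E z) ∈ gr (g + (ξ + η)) := by
      have := hDh (g + η) (E z) (hEh g z hz)
      rwa [show g + η + ξ = g + (ξ + η) by ring] at this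
    have h2 : E (D z) ∈ gr (g + (ξ + η)) := by
      have := hEh (g + ξ) (D z) (hDh g z hz)
      rwa [show g + ξ + η = g + (ξ + η) by ring] at this
    exact Submodule.sub_mem _ h1 (Submodule.smul_mem _ _ h2)
  · -- commutes with α
    ext z
    have h1 : ∀ w, D (α w) = α (D w) := fun w => by
      simpa using LinearMap.congr_fun hDa w
    have h2 : ∀ w, E (α w) = α (E w) := fun w => by
      simpa using LinearMap.congr_fun hEa w
    simp [hC, h1, h2]
  · -- main centroid identity
    intro d x hx
    have hxk : ∀ (t : ℕ) (j : Fin (m + 1)), (α ^ t) (x j) ∈ gr (d j) :=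
      fun t j => pow_mem' H.alpha_even t _ _ (hx j)
    -- the key computation
    have key : ∀ i : Fin (m + 1), C (br x) =
        sgn 𝔽 ((ξ + η) * psum d i) •
          br (Function.update (fun j => (α ^ (k + s)) (x j)) i (C (x i))) := by
      intro i
      have hks : ∀ z, (α ^ (k + s)) z = (α ^ k) ((α ^ s) z) := fun z => by
        rw [pow_add, Module.End.mul_apply]
      have hsk : ∀ z, (α ^ (k + s)) z = (α ^ s) ((α ^ k) z) := fun z => by
        rw [add_comm k s, pow_add, Module.End.mul_apply]
      -- derivation applied to x
      have hvmem : ∀ j l : Fin (m + 1),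
          Function.update (fun l => (α ^ k) (x l)) j (D (x j)) l ∈
            gr (Function.update d j (d j + ξ) l) := by
        intro j l
        rcases eq_or_ne l j with rfl | h
        · simp only [Function.update_self]
          exact hDh _ _ (hx l)
        · simp only [Function.update_of_ne h]
          exact hxk k l
      have hDbr := hDder d x hx
      -- centroid applied to x : E (br x) = sgn (η * psum d i) • br y
      set y : Fin (m + 1) → N :=
        Function.update (fun j => (α ^ s) (x j)) i (E (x i)) with hy
      set e : Fin (m + 1) → ZMod 2 := Function.update d i (d i + η) with he
      have hymem : ∀ j, y j ∈ gr (e j) := by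
        intro j
        rcases eq_or_ne j i with rfl | h
        · simp only [hy, he, Function.update_self]
          exact hEh _ _ (hx j)
        · simp only [hy, he, Function.update_of_ne h]
          exact hxk s j
      obtain ⟨hE1, hE2⟩ := hEc d x hx
      have hEbr : E (br x) = sgn 𝔽 (η * psum d i) • br y := by
        rw [hy, ← hE2, hE1 i]
      have hDy := hDder e y hymem
      -- w i : the i-th term of D (br y)
      have hwi : Function.update (fun l => (α ^ k) (y l)) i (D (y i)) =
          Function.update (fun l => (α ^ (k + s)) (x l)) i (D (E (x i))) := by
        funext l
        rcases eq_or_ne l i with rfl | h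
        · simp only [hy, Function.update_self]
        · simp only [hy, Function.update_of_ne h]
          rw [hks]
      -- for j ≠ i : the j-th term of D (br y) is a sign times E (br (v j))
      have hbrwj : ∀ j : Fin (m + 1), j ≠ i →
          br (Function.update (fun l => (α ^ k) (y l)) j (D (y j))) =
            sgn 𝔽 (η * psum (Function.update d j (d j + ξ)) i) •
              E (br (Function.update (fun l => (α ^ k) (x l)) j (D (x j)))) := by
        intro j hj
        obtain ⟨hE1j, hE2j⟩ :=
          hEc (Function.update d j (d j + ξ))
            (Function.update (fun l => (α ^ k) (x l)) j (D (x j))) (hvmem j)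
        have hupd : Function.update
            (fun l => (α ^ s) (Function.update (fun l => (α ^ k) (x l)) j (D (x j)) l)) i
            (E (Function.update (fun l => (α ^ k) (x l)) j (D (x j)) i)) =
            Function.update (fun l => (α ^ k) (y l)) j (D (y j)) := by
          funext l
          rcases eq_or_ne l i with rfl | hli
          · simp only [hy, Function.update_self, Function.update_of_ne hj,
              Function.update_of_ne (Ne.symm hj)]
            exact comm_pow' hEa k (x l)
          · rcases eq_or_ne l j with rfl | hlj
            · simp only [hy, Function.update_self, Function.update_of_ne hli]
              exact (comm_pow' hDa s (x l)).symm
            · simp only [hy, Function.update_of_ne hli, Function.update_of_ne hlj]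
              rw [← hsk, ← hks]
        have h2 : E (br (Function.update (fun l => (α ^ k) (x l)) j (D (x j)))) =
            sgn 𝔽 (η * psum (Function.update d j (d j + ξ)) i) •
              br (Function.update (fun l => (α ^ k) (y l)) j (D (y j))) := by
          rw [← hE2j, hE1j i, hupd]
        exact sgn_cancel h2
      -- the i-th term of E (D (br x))
      have hTi : E (br (Function.update (fun l => (α ^ k) (x l)) i (D (x i)))) =
          sgn 𝔽 (η * psum d i) •
            br (Function.update (fun l => (α ^ (k + s)) (x l)) i (E (D (x i)))) := by
        obtain ⟨hE1i, hE2i⟩ :=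
          hEc (Function.update d i (d i + ξ))
            (Function.update (fun l => (α ^ k) (x l)) i (D (x i))) (hvmem i)
        have hupd : Function.update
            (fun l => (α ^ s) (Function.update (fun l => (α ^ k) (x l)) i (D (x i)) l)) i
            (E (Function.update (fun l => (α ^ k) (x l)) i (D (x i)) i)) =
            Function.update (fun l => (α ^ (k + s)) (x l)) i (E (D (x i))) := by
          funext l
          rcases eq_or_ne l i with rfl | hli
          · simp only [Function.update_self]
          · simp only [Function.update_of_ne hli]
            rw [hsk]
        have hpe : psum (Function.update d i (d i + ξ)) i = psum d i := by
          rw [psum_update', if_neg (lt_irrefl i), add_zero]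
        rw [← hE2i, hE1i i, hupd, hpe]
      have hpei : psum e i = psum d i := by
        rw [he, psum_update', if_neg (lt_irrefl i), add_zero]
      -- assemble
      calc C (br x)
          = D (E (br x)) - sgn 𝔽 (ξ * η) • E (D (br x)) := hCapp _
        _ = (∑ j : Fin (m + 1), (sgn 𝔽 (η * psum d i) * sgn 𝔽 (ξ * psum e j)) •
                br (Function.update (fun l => (α ^ k) (y l)) j (D (y j))))
            - ∑ j : Fin (m + 1), (sgn 𝔽 (ξ * η) * sgn 𝔽 (ξ * psum d j)) •
                E (br (Function.update (fun l => (α ^ k) (x l)) j (D (x j)))) := by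
            rw [hEbr, map_smul, hDy, hDbr, map_sum, Finset.smul_sum]
            simp only [map_smul, smul_smul, Finset.smul_sum]
        _ = ((∑ j ∈ Finset.univ.erase i, (sgn 𝔽 (η * psum d i) * sgn 𝔽 (ξ * psum e j)) •
                br (Function.update (fun l => (α ^ k) (y l)) j (D (y j))))
              + (sgn 𝔽 (η * psum d i) * sgn 𝔽 (ξ * psum e i)) •
                br (Function.update (fun l => (α ^ k) (y l)) i (D (y i))))
            - ((∑ j ∈ Finset.univ.erase i, (sgn 𝔽 (ξ * η) * sgn 𝔽 (ξ * psum d j)) •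
                E (br (Function.update (fun l => (α ^ k) (x l)) j (D (x j)))))
              + (sgn 𝔽 (ξ * η) * sgn 𝔽 (ξ * psum d i)) •
                E (br (Function.update (fun l => (α ^ k) (x l)) i (D (x i))))) := by
            rw [Finset.sum_erase_add _ _ (Finset.mem_univ i),
              Finset.sum_erase_add _ _ (Finset.mem_univ i)]
        _ = (sgn 𝔽 (η * psum d i) * sgn 𝔽 (ξ * psum e i)) •
              br (Function.update (fun l => (α ^ k) (y l)) i (D (y i)))
            - (sgn 𝔽 (ξ * η) * sgn 𝔽 (ξ * psum d i)) •
              E (br (Function.update (fun l => (α ^ k) (x l)) i (D (x i)))) := by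
            have hsame : ∀ j ∈ Finset.univ.erase i,
                (sgn 𝔽 (η * psum d i) * sgn 𝔽 (ξ * psum e j)) •
                  br (Function.update (fun l => (α ^ k) (y l)) j (D (y j)))
                = (sgn 𝔽 (ξ * η) * sgn 𝔽 (ξ * psum d j)) •
                  E (br (Function.update (fun l => (α ^ k) (x l)) j (D (x j)))) := by
              intro j hj
              have hji : j ≠ i := Finset.ne_of_mem_erase hj
              rw [hbrwj j hji, smul_smul, mul_assoc, ← sgn_add', ← sgn_add',
                ← sgn_add' 𝔽 (ξ * η)]
              congr 2
              have hpe : psum e j = psum d j + (if i < j then η else 0) := by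
                rw [he]; exact psum_update' d i η j
              have hpd : psum (Function.update d j (d j + ξ)) i =
                  psum d i + (if j < i then ξ else 0) := psum_update' d j ξ i
              rw [hpe, hpd]
              rcases hji.lt_or_gt with h | h
              · rw [if_pos h, if_neg (asymm h)]
                exact z2B ξ η (psum d i) (psum d j)
              · rw [if_neg (asymm h), if_pos h]
                exact z2A ξ η (psum d i) (psum d j)
            rw [Finset.sum_congr rfl hsame]
            abel
        _ = sgn 𝔽 ((ξ + η) * psum d i) •
              br (Function.update (fun j => (α ^ (k + s)) (x j)) i (C (x i))) := by
            rw [hwi, hTi, hCapp, MultilinearMap.map_update_sub,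
              MultilinearMap.map_update_smul, smul_sub, smul_smul, smul_smul,
              hpei]
            congr 1
            · congr 1
              rw [← sgn_add']
              exact congrArg (sgn 𝔽) (z2C ξ η (psum d i))
            · congr 1
              rw [← sgn_add', ← sgn_add', ← sgn_add']
              exact congrArg (sgn 𝔽) (z2D ξ η (psum d i))
    have h0 : C (br x) =
        br (Function.update (fun j => (α ^ (k + s)) (x j)) 0 (C (x 0))) := by
      have := key 0
      rwa [psum_zero', mul_zero, sgn_zero', one_smul] at this
    constructor
    · intro i
      rw [← h0]
      exact key i
    · exact h0.symm
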